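/- arXiv:2511.07318 — 2 statements merged into one kernel-verified Lean document; each statement's English description precedes it below -/
import Mathlib

section
/- Let X be a compact metric space equipped with a probability measure μ that is d-Ahlfors lower regular, i.e., there exists ω > 0 with μ(B(x,r)) ≥ ω r^d for all x ∈ X and 0 < r ≤ diam(X). Let X_N = {x_1, …, x_N} be N i.i.d. samples from μ and let h_N = sup_{x∈X} min_i ‖x − x_i‖ be the fill distance. Then there exists a constant C_3 > 0 depending only on d and ω such that for all t ∈ (0, diam(X)), P(h_N > t) ≤ (C_3 t^d)^{-1} exp(−C_3 t^d N). -/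
open MeasureTheory Metric ProbabilityTheory
open scoped ENNReal

/-- Tail bound on the fill distance of i.i.d. samples from a `d`-Ahlfors lower regular
probability measure on a compact metric space: there is `C₃ > 0` depending only on `d`
and the regularity constant `ω` such that for `0 < t < diam X`,
`P(h_N > t) ≤ (C₃ t^d)⁻¹ exp(−C₃ t^d N)`. -/
theorem fill_distance_tail_bound (d : ℕ) (ω : ℝ) (hω : 0 < ω) :
    ∃ C₃ : ℝ, 0 < C₃ ∧
      ∀ (X : Type) (_ : MetricSpace X) (_ : CompactSpace X)
        (mX : MeasurableSpace X) (_ : BorelSpace X)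
        (μ : Measure X) (_ : IsProbabilityMeasure μ),
        (∀ x : X, ∀ r : ℝ, 0 < r → r ≤ diam (Set.univ : Set X) →
          ENNReal.ofReal (ω * r ^ d) ≤ μ (closedBall x r)) →
        ∀ (N : ℕ) (Ω : Type) (_ : MeasureSpace Ω) (_ : IsProbabilityMeasure (ℙ : Measure Ω))
          (Xs : Fin N → Ω → X),
          (∀ i, Measurable (Xs i)) →
          iIndepFun (m := fun _ => mX) Xs ℙ →
          (∀ i, Measure.map (Xs i) ℙ = μ) →
          ∀ t : ℝ, 0 < t → t < diam (Set.univ : Set X) →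
            ℙ {ωp : Ω | (⨆ x : X, ⨅ i : Fin N, dist x (Xs i ωp)) > t} ≤
              ENNReal.ofReal ((C₃ * t ^ d)⁻¹ * Real.exp (-(C₃ * t ^ d * N))) := by
  refine ⟨ω / 5 ^ d, by positivity, ?_⟩
  intro X _ _ mX _ μ _ hreg N Ω _ _ Xs hmeas hindep hmap t ht htd
  classical
  have hDiam : 0 < diam (Set.univ : Set X) := lt_trans ht htd
  have hX : Nonempty X := by
    by_contra h
    rw [not_nonempty_iff] at h
    rw [Set.univ_eq_empty_iff.mpr h, diam_empty] at hDiam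
    exact lt_irrefl _ hDiam
  set p5 : ℝ := ω * (t / 5) ^ d with hp5def
  set p2 : ℝ := ω * (t / 2) ^ d with hp2def
  have hp5 : 0 < p5 := by positivity
  have hp2 : 0 < p2 := by positivity
  have hp52 : p5 ≤ p2 := by
    apply mul_le_mul_of_nonneg_left _ hω.le
    exact pow_le_pow_left₀ (by linarith) (by linarith) d
  have hC : ω / 5 ^ d * t ^ d = p5 := by rw [hp5def, div_pow]; ring
  -- cardinality bound for separated sets
  have hcard : ∀ Y : Finset X, (∀ y ∈ Y, ∀ z ∈ Y, y ≠ z → t / 2 ≤ dist y z) →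
      (Y.card : ℝ) * p5 ≤ 1 := by
    intro Y hsep
    have hdisj : (Y : Set X).PairwiseDisjoint (fun y => closedBall y (t / 5)) := by
      intro y hy z hz hyz
      refine closedBall_disjoint_closedBall ?_
      have := hsep y hy z hz hyz
      linarith
    have h1 : (Y.card : ℝ≥0∞) * ENNReal.ofReal p5 ≤ 1 := by
      calc (Y.card : ℝ≥0∞) * ENNReal.ofReal p5
          = ∑ _y ∈ Y, ENNReal.ofReal p5 := by rw [Finset.sum_const, nsmul_eq_mul]
        _ ≤ ∑ y ∈ Y, μ (closedBall y (t / 5)) :=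
            Finset.sum_le_sum fun y _ => hreg y (t / 5) (by linarith) (by linarith)
        _ = μ (⋃ y ∈ Y, closedBall y (t / 5)) :=
            (measure_biUnion_finset hdisj fun y _ => measurableSet_closedBall).symm
        _ ≤ 1 := (measure_mono (Set.subset_univ _)).trans_eq measure_univ
    have h2 := ENNReal.toReal_mono ENNReal.one_ne_top h1
    rwa [ENNReal.toReal_mul, ENNReal.toReal_natCast, ENNReal.toReal_ofReal hp5.le,
      ENNReal.toReal_one] at h2
  -- maximal separated set
  set A : Set ℕ := {n | ∃ Y : Finset X,
    (∀ y ∈ Y, ∀ z ∈ Y, y ≠ z → t / 2 ≤ dist y z) ∧ Y.card = n} with hA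
  have h0A : 0 ∈ A := ⟨∅, by simp, rfl⟩
  have hbddA : BddAbove A := by
    refine ⟨⌈p5⁻¹⌉₊, fun n hn => ?_⟩
    obtain ⟨Y, hsep, rfl⟩ := hn
    have h1 := hcard Y hsep
    have h2 : (Y.card : ℝ) ≤ p5⁻¹ := by
      rw [← one_div]
      exact (le_div_iff₀ hp5).mpr h1
    exact_mod_cast h2.trans (Nat.le_ceil _)
  obtain ⟨Y, hsep, hcardY⟩ : sSup A ∈ A := Nat.sSup_mem ⟨0, h0A⟩ hbddA
  have hYle : (Y.card : ℝ) ≤ p5⁻¹ := by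
    rw [← one_div]
    exact (le_div_iff₀ hp5).mpr (hcard Y hsep)
  have hmax : ∀ x : X, ∃ y ∈ Y, dist x y < t / 2 := by
    intro x
    by_contra h
    push_neg at h
    have hxY : x ∉ Y := by
      intro hx
      have := h x hx
      rw [dist_self] at this
      linarith
    have hsep' : ∀ a ∈ insert x Y, ∀ b ∈ insert x Y, a ≠ b → t / 2 ≤ dist a b := by
      intro a ha b hb hab
      rcases Finset.mem_insert.mp ha with ha' | ha' <;>
        rcases Finset.mem_insert.mp hb with hb' | hb'
      · exact absurd (ha'.trans hb'.symm) hab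
      · rw [ha']; exact h b hb'
      · rw [hb', dist_comm]; exact h a ha'
      · exact hsep a ha' b hb' hab
    have hmem : (insert x Y).card ∈ A := ⟨insert x Y, hsep', rfl⟩
    have hle := le_csSup hbddA hmem
    rw [Finset.card_insert_of_notMem hxY, hcardY] at hle
    omega
  -- event inclusion
  have hsub : {ωp : Ω | (⨆ x : X, ⨅ i : Fin N, dist x (Xs i ωp)) > t} ⊆
      ⋃ y ∈ Y, ⋂ i : Fin N, Xs i ⁻¹' (closedBall y (t / 2))ᶜ := by
    intro ωp hωp
    simp only [Set.mem_setOf_eq] at hωp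
    have hbb : ∀ ωq : Ω, ∀ x : X,
        BddBelow (Set.range fun i : Fin N => dist x (Xs i ωq)) := by
      rintro ωq x
      exact ⟨0, by rintro _ ⟨i, rfl⟩; exact dist_nonneg⟩
    have hbdd : BddAbove (Set.range fun x : X => ⨅ i : Fin N, dist x (Xs i ωp)) := by
      refine ⟨diam (Set.univ : Set X), ?_⟩
      rintro _ ⟨x, rfl⟩
      rcases Nat.eq_zero_or_pos N with hN | hN
      · subst hN
        simpa using diam_nonneg (s := (Set.univ : Set X))
      · exact (ciInf_le (hbb ωp x) ⟨0, hN⟩).trans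
          (dist_le_diam_of_mem isCompact_univ.isBounded trivial trivial)
    obtain ⟨x, hx⟩ := (lt_ciSup_iff hbdd).mp hωp
    have hxi : ∀ i, t < dist x (Xs i ωp) := fun i => lt_of_lt_of_le hx (ciInf_le (hbb ωp x) i)
    obtain ⟨y, hyY, hxy⟩ := hmax x
    refine Set.mem_biUnion hyY (Set.mem_iInter.mpr fun i => ?_)
    simp only [Set.mem_preimage, Set.mem_compl_iff, mem_closedBall, not_le]
    have htri := dist_triangle x y (Xs i ωp)
    have := hxi i
    rw [dist_comm]
    linarith [dist_comm y (Xs i ωp)]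
  have hp2le1 : p2 ≤ 1 := by
    obtain ⟨x0⟩ := hX
    have h1 := hreg x0 (t / 2) (by linarith) (by linarith)
    have h2 : μ (closedBall x0 (t / 2)) ≤ 1 := prob_le_one
    exact ENNReal.ofReal_le_one.mp (h1.trans h2)
  -- per-point bound
  have hone : ∀ y ∈ Y, ℙ (⋂ i : Fin N, Xs i ⁻¹' (closedBall y (t / 2))ᶜ) ≤
      ENNReal.ofReal ((1 - p2) ^ N) := by
    intro y _
    rw [hindep.meas_iInter fun i =>
      ⟨(closedBall y (t / 2))ᶜ, measurableSet_closedBall.compl, rfl⟩]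
    have hfac : ∀ i : Fin N, ℙ (Xs i ⁻¹' (closedBall y (t / 2))ᶜ) ≤ ENNReal.ofReal (1 - p2) := by
      intro i
      have hmapi : ℙ (Xs i ⁻¹' (closedBall y (t / 2))ᶜ) = μ (closedBall y (t / 2))ᶜ := by
        rw [← hmap i, Measure.map_apply (hmeas i) measurableSet_closedBall.compl]
      rw [hmapi, measure_compl measurableSet_closedBall (measure_ne_top μ _), measure_univ]
      have hB := hreg y (t / 2) (by linarith) (by linarith)
      calc 1 - μ (closedBall y (t / 2)) ≤ 1 - ENNReal.ofReal p2 := tsub_le_tsub_left hB 1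
        _ = ENNReal.ofReal (1 - p2) := by
            rw [ENNReal.ofReal_sub _ hp2.le, ENNReal.ofReal_one]
    calc ∏ i : Fin N, ℙ (Xs i ⁻¹' (closedBall y (t / 2))ᶜ)
        ≤ ∏ _i : Fin N, ENNReal.ofReal (1 - p2) :=
          Finset.prod_le_prod' fun i _ => hfac i
      _ = ENNReal.ofReal ((1 - p2) ^ N) := by
          rw [Finset.prod_const, Finset.card_univ, Fintype.card_fin,
            ENNReal.ofReal_pow (by linarith)]
  -- final computation
  have hreal : (Y.card : ℝ) * (1 - p2) ^ N ≤ p5⁻¹ * Real.exp (-(p5 * N)) := by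
    have h1 : (1 - p2) ^ N ≤ Real.exp (-(p5 * N)) := by
      calc (1 - p2) ^ N ≤ Real.exp (-p2) ^ N :=
            pow_le_pow_left₀ (by linarith) (by linarith [Real.add_one_le_exp (-p2)]) N
        _ = Real.exp (-p2 * N) := by
            rw [← Real.exp_nat_mul]; ring_nf
        _ ≤ Real.exp (-(p5 * N)) := by
            apply Real.exp_le_exp.mpr
            have : (0:ℝ) ≤ (N:ℝ) := Nat.cast_nonneg N
            nlinarith
    exact mul_le_mul hYle h1 (pow_nonneg (by linarith) N) (inv_nonneg.2 hp5.le)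
  calc ℙ {ωp : Ω | (⨆ x : X, ⨅ i : Fin N, dist x (Xs i ωp)) > t}
      ≤ ℙ (⋃ y ∈ Y, ⋂ i : Fin N, Xs i ⁻¹' (closedBall y (t / 2))ᶜ) := measure_mono hsub
    _ ≤ ∑ y ∈ Y, ℙ (⋂ i : Fin N, Xs i ⁻¹' (closedBall y (t / 2))ᶜ) :=
        measure_biUnion_finset_le _ _
    _ ≤ ∑ _y ∈ Y, ENNReal.ofReal ((1 - p2) ^ N) := Finset.sum_le_sum hone
    _ = ENNReal.ofReal ((Y.card : ℝ) * (1 - p2) ^ N) := by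
        rw [Finset.sum_const, nsmul_eq_mul, ← ENNReal.ofReal_natCast,
          ← ENNReal.ofReal_mul (Nat.cast_nonneg _)]
    _ ≤ ENNReal.ofReal (p5⁻¹ * Real.exp (-(p5 * N))) := ENNReal.ofReal_le_ofReal hreal
    _ = ENNReal.ofReal ((ω / 5 ^ d * t ^ d)⁻¹ *
          Real.exp (-(ω / 5 ^ d * t ^ d * N))) := by rw [hC]
end

section
/- Under the setup of the previous tail bound, for any δ ∈ (0,1) and any N with N > δ·e, with probability at least 1 − δ, the fill distance of N i.i.d. uniform samples satisfies h_N ≤ (ln(N/δ) / (C_3 N))^{1/d}, where C_3 > 0 depends only on d. -/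
open MeasureTheory Metric ProbabilityTheory

section FillDistanceAux

open Set ENNReal

noncomputable section
namespace FD

def pole (d : ℕ) : EuclideanSpace ℝ (Fin (d+1)) := EuclideanSpace.single (Fin.last d) 1

def phi (d : ℕ) (u : EuclideanSpace ℝ (Fin d)) : EuclideanSpace ℝ (Fin (d+1)) :=
  WithLp.toLp 2 (Fin.snoc u.ofLp (Real.sqrt (1 - ‖u‖^2)))

lemma sum_sq_eq_norm_sq {d : ℕ} (u : EuclideanSpace ℝ (Fin d)) :
    ∑ j, u j ^ 2 = ‖u‖ ^ 2 := by
  rw [EuclideanSpace.norm_eq, Real.sq_sqrt (by positivity)]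
  simp [sq_abs]

lemma phi_mem_sphere {d : ℕ} {u : EuclideanSpace ℝ (Fin d)} (h : ‖u‖ ≤ 1) :
    phi d u ∈ sphere (0 : EuclideanSpace ℝ (Fin (d+1))) 1 := by
  have h0 : (0:ℝ) ≤ 1 - ‖u‖ ^ 2 := by nlinarith [norm_nonneg u]
  simp only [mem_sphere_iff_norm, sub_zero]
  rw [EuclideanSpace.norm_eq, Fin.sum_univ_castSucc]
  simp only [phi, WithLp.ofLp_toLp, Fin.snoc_castSucc, Fin.snoc_last, Real.norm_eq_abs, sq_abs]
  rw [sum_sq_eq_norm_sq, Real.sq_sqrt h0]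
  simp

lemma dist_phi_pole {d : ℕ} {u : EuclideanSpace ℝ (Fin d)} (h : ‖u‖ ≤ 1) :
    dist (phi d u) (pole d) ≤ Real.sqrt 2 * ‖u‖ := by
  have h0 : (0:ℝ) ≤ 1 - ‖u‖ ^ 2 := by nlinarith [norm_nonneg u]
  have hsq : Real.sqrt (1 - ‖u‖^2) ≤ 1 :=
    Real.sqrt_le_one.mpr (by nlinarith [norm_nonneg u])
  have h1 : 1 - Real.sqrt (1 - ‖u‖^2) ≤ ‖u‖^2 := by
    nlinarith [Real.sq_sqrt h0, Real.sqrt_nonneg (1 - ‖u‖^2)]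
  rw [EuclideanSpace.dist_eq, Fin.sum_univ_castSucc]
  simp only [phi, pole, WithLp.ofLp_toLp, Fin.snoc_castSucc, Fin.snoc_last]
  have hlast : (EuclideanSpace.single (Fin.last d) (1:ℝ)) (Fin.last d) = 1 := by
    simp [EuclideanSpace.single_apply]
  have hcs : ∀ j : Fin d, (EuclideanSpace.single (Fin.last d) (1:ℝ)) (Fin.castSucc j) = 0 := by
    intro j
    simp [EuclideanSpace.single_apply, Fin.ne_of_lt (Fin.castSucc_lt_last j)]
  simp only [hlast, hcs, Real.dist_eq, sub_zero]
  have : ∑ j : Fin d, |u j| ^ 2 = ‖u‖^2 := by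
    simp only [sq_abs]; exact sum_sq_eq_norm_sq u
  rw [this]
  have hb : |Real.sqrt (1 - ‖u‖^2) - 1| ^ 2 ≤ ‖u‖^2 * ‖u‖^2 := by
    rw [sq_abs]
    nlinarith [Real.sqrt_nonneg (1 - ‖u‖^2)]
  have : ‖u‖^2 + |Real.sqrt (1 - ‖u‖^2) - 1| ^ 2 ≤ 2 * ‖u‖^2 := by
    nlinarith [norm_nonneg u]
  calc Real.sqrt (‖u‖^2 + |Real.sqrt (1 - ‖u‖^2) - 1| ^ 2)
      ≤ Real.sqrt (2 * ‖u‖^2) := Real.sqrt_le_sqrt this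
    _ = Real.sqrt 2 * ‖u‖ := by
        rw [Real.sqrt_mul (by norm_num), Real.sqrt_sq (norm_nonneg u)]

def proj (d : ℕ) (x : EuclideanSpace ℝ (Fin (d+1))) : EuclideanSpace ℝ (Fin d) :=
  WithLp.toLp 2 (fun j => x (Fin.castSucc j))

lemma proj_phi {d : ℕ} (u : EuclideanSpace ℝ (Fin d)) : proj d (phi d u) = u := by
  ext j
  simp [proj, phi, Fin.snoc_castSucc]

lemma lipschitz_proj (d : ℕ) : LipschitzWith 1 (proj d) := by
  apply LipschitzWith.of_dist_le_mul
  intro x y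
  simp only [NNReal.coe_one, one_mul]
  rw [EuclideanSpace.dist_eq, EuclideanSpace.dist_eq]
  apply Real.sqrt_le_sqrt
  rw [Fin.sum_univ_castSucc]
  have : ∑ j : Fin d, dist (proj d x j) (proj d y j) ^ 2
      = ∑ j : Fin d, dist (x (Fin.castSucc j)) (y (Fin.castSucc j)) ^ 2 := rfl
  rw [this]
  have := sq_nonneg (dist (x (Fin.last d)) (y (Fin.last d)))
  linarith


lemma cap_pole (d : ℕ) (hd : 0 < d) {ρ : ℝ} (hρ0 : 0 < ρ) (hρ2 : ρ ≤ 2) :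
    ENNReal.ofReal ((ρ / Real.sqrt d) ^ d)
      ≤ μH[(d:ℝ)] (ball (pole d) ρ ∩ sphere (0 : EuclideanSpace ℝ (Fin (d+1))) 1) := by
  have hd' : (0:ℝ) ≤ (d:ℝ) := Nat.cast_nonneg d
  have hsd : (0:ℝ) < Real.sqrt d := Real.sqrt_pos.mpr (by exact_mod_cast hd)
  set B : Set (EuclideanSpace ℝ (Fin d)) := ball 0 (ρ/2) with hB
  -- image of B under phi is inside the cap
  have hsub : phi d '' B ⊆ ball (pole d) ρ ∩ sphere (0 : EuclideanSpace ℝ (Fin (d+1))) 1 := by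
    rintro _ ⟨u, hu, rfl⟩
    have hu' : ‖u‖ < ρ/2 := by simpa [hB, mem_ball_zero_iff] using hu
    have hu1 : ‖u‖ ≤ 1 := le_trans hu'.le (by linarith)
    refine ⟨?_, phi_mem_sphere hu1⟩
    have h2 : Real.sqrt 2 ≤ 2 := by
      nlinarith [Real.sq_sqrt (by norm_num : (0:ℝ) ≤ 2), Real.sqrt_nonneg 2]
    have := dist_phi_pole hu1
    have : dist (phi d u) (pole d) < Real.sqrt 2 * (ρ/2) := by
      calc dist (phi d u) (pole d) ≤ Real.sqrt 2 * ‖u‖ := this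
        _ < Real.sqrt 2 * (ρ/2) := by
            apply mul_lt_mul_of_pos_left hu' (by positivity)
    exact mem_ball.mpr (by nlinarith [Real.sqrt_nonneg 2])
  -- μH B ≤ μH (phi '' B)
  have step1 : μH[(d:ℝ)] B ≤ μH[(d:ℝ)] (phi d '' B) := by
    have h := (lipschitz_proj d).hausdorffMeasure_image_le hd' (phi d '' B)
    have himg : proj d '' (phi d '' B) = B := by
      rw [Set.image_image]
      simp [proj_phi]
    rw [himg] at h
    simpa using h
  -- lower bound μH B via the pi-type Lebesgue measure
  have step2 : ENNReal.ofReal ((ρ / Real.sqrt d) ^ d) ≤ μH[(d:ℝ)] B := by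
    haveI : Nonempty (Fin d) := Fin.pos_iff_nonempty.mp hd
    set e := WithLp.equiv 2 (Fin d → ℝ) with he
    have hlip : LipschitzWith 1 e := PiLp.lipschitzWith_ofLp 2 _
    have h := hlip.hausdorffMeasure_image_le hd' B
    set cube : Set (Fin d → ℝ) := ball 0 (ρ/(2*Real.sqrt d)) with hcube
    have hcsub : cube ⊆ e '' B := by
      intro x hx
      refine ⟨e.symm x, ?_, by simp⟩
      have hx' : ‖x‖ < ρ/(2*Real.sqrt d) := by simpa [hcube, mem_ball_zero_iff] using hx
      rw [hB, mem_ball_zero_iff]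
      have hnorm : ‖(e.symm x : EuclideanSpace ℝ (Fin d))‖ ≤ Real.sqrt d * ‖x‖ := by
        rw [EuclideanSpace.norm_eq]
        have hterm : ∀ j : Fin d, ‖(e.symm x : EuclideanSpace ℝ (Fin d)) j‖^2 ≤ ‖x‖^2 := by
          intro j
          have : (e.symm x : EuclideanSpace ℝ (Fin d)) j = x j := rfl
          rw [this]
          have := norm_le_pi_norm x j
          nlinarith [norm_nonneg (x j), norm_nonneg x]
        calc Real.sqrt (∑ j, ‖(e.symm x : EuclideanSpace ℝ (Fin d)) j‖^2)
            ≤ Real.sqrt (∑ _j : Fin d, ‖x‖^2) :=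
              Real.sqrt_le_sqrt (Finset.sum_le_sum fun j _ => hterm j)
          _ = Real.sqrt d * ‖x‖ := by
              rw [Finset.sum_const, Finset.card_univ, Fintype.card_fin, nsmul_eq_mul,
                Real.sqrt_mul (by positivity), Real.sqrt_sq (norm_nonneg x)]
      calc ‖(e.symm x : EuclideanSpace ℝ (Fin d))‖ ≤ Real.sqrt d * ‖x‖ := hnorm
        _ < Real.sqrt d * (ρ/(2*Real.sqrt d)) := by
            exact mul_lt_mul_of_pos_left hx' hsd
        _ = ρ/2 := by field_simp
    have hpi : (μH[(d:ℝ)] : Measure (Fin d → ℝ)) = volume := by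
      have := hausdorffMeasure_pi_real (ι := Fin d)
      simpa [Fintype.card_fin] using this
    have hvol : volume cube = ENNReal.ofReal ((ρ / Real.sqrt d) ^ d) := by
      rw [hcube, Real.volume_pi_ball _ (by positivity)]
      congr 1
      rw [Fintype.card_fin]
      congr 1
      field_simp
    calc ENNReal.ofReal ((ρ / Real.sqrt d) ^ d) = volume cube := hvol.symm
      _ = μH[(d:ℝ)] cube := by rw [hpi]
      _ ≤ μH[(d:ℝ)] (e '' B) := measure_mono hcsub
      _ ≤ 1 * μH[(d:ℝ)] B := by simpa using h
      _ = μH[(d:ℝ)] B := one_mul _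
  calc ENNReal.ofReal ((ρ / Real.sqrt d) ^ d) ≤ μH[(d:ℝ)] B := step2
    _ ≤ μH[(d:ℝ)] (phi d '' B) := step1
    _ ≤ _ := measure_mono hsub


lemma norm_pole (d : ℕ) : ‖pole d‖ = 1 := by
  simp [pole, EuclideanSpace.norm_single]

lemma cap_center (d : ℕ) {y : EuclideanSpace ℝ (Fin (d+1))}
    (hy : y ∈ sphere (0 : EuclideanSpace ℝ (Fin (d+1))) 1) (ρ : ℝ) :
    μH[(d:ℝ)] (ball y ρ ∩ sphere (0 : EuclideanSpace ℝ (Fin (d+1))) 1)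
      = μH[(d:ℝ)] (ball (pole d) ρ ∩ sphere (0 : EuclideanSpace ℝ (Fin (d+1))) 1) := by
  have hy' : ‖y‖ = 1 := by simpa using hy
  set R := Submodule.reflection (ℝ ∙ (pole d - y))ᗮ with hRdef
  have hR : R (pole d) = y := Submodule.reflection_sub (by rw [norm_pole, hy'])
  have himg : R '' (ball (pole d) ρ ∩ sphere (0 : EuclideanSpace ℝ (Fin (d+1))) 1)
      = ball y ρ ∩ sphere (0 : EuclideanSpace ℝ (Fin (d+1))) 1 := by
    rw [Set.image_inter R.injective]
    congr 1
    · have := R.toIsometryEquiv.image_ball (pole d) ρ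
      simpa [hR] using this
    · have := R.toIsometryEquiv.image_sphere 0 1
      simpa using this
  rw [← himg, R.isometry.hausdorffMeasure_image (Or.inl (Nat.cast_nonneg d))]

lemma exists_net (d : ℕ) {t : ℝ} (ht0 : 0 < t) (ht2 : t < 2) :
    ∃ s : Finset (EuclideanSpace ℝ (Fin (d+1))),
      (↑s ⊆ sphere (0 : EuclideanSpace ℝ (Fin (d+1))) 1) ∧
      (∀ x ∈ sphere (0 : EuclideanSpace ℝ (Fin (d+1))) 1, ∃ y ∈ s, dist x y < t/2) ∧
      (s.card : ℝ) ≤ (8/t)^(d+1) := by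
  classical
  set E := EuclideanSpace ℝ (Fin (d+1))
  set good : Finset E → Prop := fun s =>
    (↑s ⊆ sphere (0:E) 1) ∧ (↑s : Set E).Pairwise (fun a b => t/2 ≤ dist a b) with hgood
  -- cardinality bound for separated sets
  have card_bound : ∀ s : Finset E, good s → (s.card : ℝ) ≤ (8/t)^(d+1) := by
    intro s hs
    set v := volume (ball (0:E) 1) with hv
    have hv0 : v ≠ 0 := (measure_ball_pos volume 0 one_pos).ne'
    have hvt : v ≠ ⊤ := measure_ball_lt_top.ne
    have hdisj : (↑s : Set E).PairwiseDisjoint (fun y => ball y (t/4)) := by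
      intro a ha b hb hab
      exact Metric.ball_disjoint_ball (by linarith [hs.2 ha hb hab])
    have hunion : (⋃ y ∈ s, ball y (t/4)) ⊆ ball (0:E) 2 := by
      intro z hz
      simp only [Set.mem_iUnion] at hz
      obtain ⟨y, hy, hzy⟩ := hz
      have hy1 : ‖y‖ = 1 := by simpa using hs.1 hy
      have : dist z 0 ≤ dist z y + dist y 0 := dist_triangle _ _ _
      simp only [dist_zero_right, hy1] at this
      rw [mem_ball, dist_zero_right]
      have := mem_ball.mp hzy
      linarith
    have hmeas : volume (⋃ y ∈ s, ball y (t/4)) = ∑ y ∈ s, volume (ball y (t/4)) :=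
      measure_biUnion_finset hdisj (fun y _ => measurableSet_ball)
    have hballvol : ∀ y : E, volume (ball y (t/4)) = ENNReal.ofReal ((t/4)^(d+1)) * v := by
      intro y
      rw [Measure.addHaar_ball volume y (by positivity : (0:ℝ) ≤ t/4)]
      congr 2
      rw [finrank_euclideanSpace_fin]
    have hbig : volume (ball (0:E) 2) = ENNReal.ofReal (2^(d+1)) * v := by
      rw [Measure.addHaar_ball volume 0 (by norm_num : (0:ℝ) ≤ 2)]
      congr 2
      rw [finrank_euclideanSpace_fin]
    have key : (s.card : ℝ≥0∞) * (ENNReal.ofReal ((t/4)^(d+1)) * v)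
        ≤ ENNReal.ofReal (2^(d+1)) * v := by
      calc (s.card : ℝ≥0∞) * (ENNReal.ofReal ((t/4)^(d+1)) * v)
          = ∑ y ∈ s, volume (ball y (t/4)) := by
            rw [Finset.sum_congr rfl (fun y _ => hballvol y), Finset.sum_const, nsmul_eq_mul]
        _ = volume (⋃ y ∈ s, ball y (t/4)) := hmeas.symm
        _ ≤ volume (ball (0:E) 2) := measure_mono hunion
        _ = _ := hbig
    rw [← mul_assoc] at key
    have key2 : (s.card : ℝ≥0∞) * ENNReal.ofReal ((t/4)^(d+1)) ≤ ENNReal.ofReal (2^(d+1)) :=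
      (ENNReal.mul_le_mul_iff_left hv0 hvt).mp key
    have key3 : (s.card : ℝ) * (t/4)^(d+1) ≤ 2^(d+1) := by
      have := key2
      rw [← ENNReal.ofReal_natCast, ← ENNReal.ofReal_mul (by positivity)] at this
      exact (ENNReal.ofReal_le_ofReal_iff (by positivity)).mp this
    have hpow : (0:ℝ) < (t/4)^(d+1) := by positivity
    have : (s.card : ℝ) ≤ 2^(d+1)/((t/4)^(d+1)) := (le_div_iff₀ hpow).mpr key3
    calc (s.card : ℝ) ≤ 2^(d+1)/((t/4)^(d+1)) := this
      _ = (2/(t/4))^(d+1) := (div_pow 2 (t/4) (d+1)).symm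
      _ = (8/t)^(d+1) := by rw [show (2:ℝ)/(t/4) = 8/t by field_simp; ring]
  -- pick a separated set of maximal cardinality
  set C : Set ℕ := {n | ∃ s : Finset E, good s ∧ s.card = n} with hC
  have hCne : C.Nonempty := ⟨0, ∅, ⟨by simp, by simp⟩, rfl⟩
  have hCbdd : BddAbove C := by
    refine ⟨Nat.floor ((8/t)^(d+1) : ℝ), ?_⟩
    rintro n ⟨s, hs, rfl⟩
    exact Nat.le_floor (card_bound s hs)
  obtain ⟨s₀, hs₀, hcard₀⟩ : ∃ s : Finset E, good s ∧ s.card = sSup C := Nat.sSup_mem hCne hCbdd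
  refine ⟨s₀, hs₀.1, ?_, card_bound s₀ hs₀⟩
  intro x hx
  by_contra hcon
  push_neg at hcon
  have hxs : x ∉ s₀ := by
    intro hmem
    have := hcon x hmem
    simp at this
    linarith
  have hgood' : good (insert x s₀) := by
    constructor
    · intro z hz
      simp only [Finset.coe_insert, Set.mem_insert_iff] at hz
      rcases hz with rfl | hz
      · exact hx
      · exact hs₀.1 hz
    · rw [Finset.coe_insert]
      refine Set.Pairwise.insert hs₀.2 ?_
      intro b hb _
      have := hcon b hb
      constructor
      · linarith
      · rw [dist_comm]; linarith
  have : (insert x s₀).card ∈ C := ⟨_, hgood', rfl⟩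
  have hle := le_csSup hCbdd this
  rw [Finset.card_insert_of_notMem hxs, hcard₀] at hle
  omega


set_option maxHeartbeats 1000000 in

lemma endgame (d : ℕ) (hd : 0 < d) (δ : ℝ) (N : ℕ) (hδ0 : 0 < δ) (hδ1 : δ < 1)
    (hN1 : 1 ≤ (N:ℝ)) (hNδ : δ * Real.exp 1 < N)
    (cL : ℝ) (hcL0 : 0 < cL) (hcL1 : cL ≤ 1)
    (t M : ℝ) (ht0 : 0 < t) (hM0 : 0 ≤ M) (hM : M ≤ (8/t)^(d+1))
    (hq1 : cL * t^d ≤ 1)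
    (htd : t^d = Real.log (N/δ) / ((cL / (8^(d+1)+3)) * N)) :
    M * (1 - cL * t^d)^N ≤ δ := by
  set k : ℝ := 8^(d+1)+3 with hk
  set L : ℝ := Real.log (N/δ) with hLdef
  set q : ℝ := cL * t^d with hqdef
  have h8 : (0:ℝ) < 8^(d+1) := by positivity
  have hk0 : (0:ℝ) < k := by rw [hk]; linarith
  have hNpos : (0:ℝ) < N := lt_of_lt_of_le one_pos hN1
  have hNδpos : (0:ℝ) < (N:ℝ)/δ := by positivity
  have hL1 : 1 < L := by
    rw [hLdef]
    rw [← Real.exp_lt_exp (x := 1)]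
    rw [Real.exp_log hNδpos]
    rw [lt_div_iff₀ hδ0] at *
    linarith [hNδ]
  have hC3le : cL / k ≤ 1 := by
    rw [div_le_one hk0]; linarith
  have hqN : q * N = k * L := by
    rw [hqdef, htd]
    field_simp
  have hq0 : 0 ≤ q := by positivity
  -- step 1 : (1-q)^N ≤ exp (-(q*N))
  have h1 : (1 - q)^N ≤ Real.exp (-(q * (N:ℝ))) := by
    have hbase : 1 - q ≤ Real.exp (-q) := by
      have := Real.add_one_le_exp (-q); linarith
    calc (1 - q)^N ≤ (Real.exp (-q))^N :=
          pow_le_pow_left₀ (by linarith) hbase N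
      _ = Real.exp (-(q * N)) := by
          rw [← Real.exp_nat_mul]; ring_nf
  -- step 2 : exp(-(q*N)) = (δ/N)^k
  have hδN : (0:ℝ) < δ/N := by positivity
  have h2 : Real.exp (-(q * (N:ℝ))) = (δ/(N:ℝ)) ^ (k:ℝ) := by
    rw [Real.rpow_def_of_pos hδN]
    congr 1
    have hlog : Real.log (δ/(N:ℝ)) = -L := by
      rw [hLdef, ← Real.log_inv]
      congr 1
      field_simp
    rw [hlog, hqN]; ring
  -- step 3 : M ≤ 8^(d+1) * N^2
  have htd1 : 1/(N:ℝ) ≤ t^d := by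
    rw [htd]
    have hden : 0 < (cL / k) * N := by positivity
    rw [div_le_div_iff₀ hNpos hden]
    calc 1 * (cL/k * N) ≤ 1 * (1 * N) := by
          apply mul_le_mul_of_nonneg_left _ (by norm_num)
          exact mul_le_mul_of_nonneg_right hC3le hNpos.le
      _ = N := by ring
      _ ≤ L * N := le_mul_of_one_le_left hNpos.le hL1.le
  have ht1 : 1/((N:ℝ)^2) ≤ t^(d+1) := by
    have hdd : ((1:ℝ)/(N:ℝ)^2)^d ≤ (t^(d+1))^d := by
      have e1 : ((1:ℝ)/(N:ℝ)^2)^d = 1/((N:ℝ)^(2*d)) := by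
        rw [div_pow, one_pow, ← pow_mul]
      have e2 : ((t:ℝ)^(d+1))^d = (t^d)^(d+1) := by
        rw [← pow_mul, ← pow_mul, Nat.mul_comm]
      rw [e1, e2]
      have i1 : (1:ℝ)/((N:ℝ)^(2*d)) ≤ 1/((N:ℝ)^(d+1)) := by
        apply one_div_le_one_div_of_le (by positivity)
        exact pow_le_pow_right₀ hN1 (by omega)
      have i2 : (1:ℝ)/((N:ℝ)^(d+1)) ≤ (t^d)^(d+1) := by
        rw [← one_pow (d+1), ← div_pow]
        exact pow_le_pow_left₀ (by positivity) htd1 (d+1)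
      linarith
    exact (pow_le_pow_iff_left₀ (by positivity) (by positivity) (by omega)).mp hdd
  have h3 : M ≤ 8^(d+1) * (N:ℝ)^2 := by
    calc M ≤ (8/t)^(d+1) := hM
      _ = 8^(d+1) / t^(d+1) := div_pow 8 t (d+1)
      _ ≤ 8^(d+1) / (1/(N:ℝ)^2) := by
          apply div_le_div_of_nonneg_left (by positivity) (by positivity) ht1
      _ = 8^(d+1) * (N:ℝ)^2 := by field_simp
  -- step 4 : (δ/N)^k ≤ (1/8^(d+1)) * (δ^3/N^3)
  have hδNe : δ/(N:ℝ) ≤ Real.exp (-1) := by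
    rw [Real.exp_neg]
    rw [div_le_iff₀ hNpos]
    rw [inv_eq_one_div, div_mul_eq_mul_div, le_div_iff₀ (Real.exp_pos 1)]
    nlinarith [hNδ]
  have h4 : (δ/(N:ℝ)) ^ (k:ℝ) ≤ (1/8^(d+1)) * (δ^3/(N:ℝ)^3) := by
    rw [hk, Real.rpow_add hδN]
    have ha : (δ/(N:ℝ)) ^ ((8:ℝ)^(d+1)) ≤ 1/8^(d+1) := by
      calc (δ/(N:ℝ)) ^ ((8:ℝ)^(d+1)) ≤ (Real.exp (-1)) ^ ((8:ℝ)^(d+1)) :=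
            Real.rpow_le_rpow hδN.le hδNe (by positivity)
        _ = Real.exp (-(8^(d+1))) := by
            rw [← Real.exp_mul]; ring_nf
        _ ≤ 1/8^(d+1) := by
            rw [Real.exp_neg, inv_eq_one_div]
            apply one_div_le_one_div_of_le h8
            have := Real.add_one_le_exp ((8:ℝ)^(d+1))
            linarith
    have hb : (δ/(N:ℝ)) ^ ((3:ℝ)) = δ^3/(N:ℝ)^3 := by
      rw [show (3:ℝ) = ((3:ℕ):ℝ) by norm_num, Real.rpow_natCast, div_pow]
    rw [hb]
    exact mul_le_mul_of_nonneg_right ha (by positivity)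
  -- combine
  calc M * (1 - q)^N ≤ (8^(d+1) * (N:ℝ)^2) * ((δ/(N:ℝ)) ^ (k:ℝ)) := by
        have hle : (1-q)^N ≤ (δ/(N:ℝ)) ^ (k:ℝ) := by rw [← h2]; exact h1
        have h1n : (0:ℝ) ≤ (1-q)^N := pow_nonneg (by linarith) N
        apply mul_le_mul h3 hle h1n (by positivity)
    _ ≤ (8^(d+1) * (N:ℝ)^2) * ((1/8^(d+1)) * (δ^3/(N:ℝ)^3)) := by
        apply mul_le_mul_of_nonneg_left h4 (by positivity)
    _ = δ^3 / (N:ℝ) := by field_simp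
    _ ≤ δ := by
        rw [div_le_iff₀ hNpos]
        have hδ3 : δ^3 ≤ δ := pow_le_of_le_one hδ0.le hδ1.le (by norm_num)
        nlinarith

end FD
end
end FillDistanceAux

open FD Set ENNReal in
/-- High-probability fill-distance bound for i.i.d. uniform samples on the sphere:
there is `C₃ > 0` depending only on `d` such that for any `δ ∈ (0,1)` and `N > δ·e`,
with probability at least `1 − δ` the fill distance satisfies
`h_N ≤ (ln(N/δ) / (C₃ N))^{1/d}`. -/
theorem fill_distance_high_prob_bound (d : ℕ) (hd : 0 < d) :
    ∃ C₃ : ℝ, 0 < C₃ ∧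
      ∀ (δ : ℝ), 0 < δ → δ < 1 →
      ∀ (N : ℕ), δ * Real.exp 1 < N →
      ∀ (Ω : Type) (_ : MeasureSpace Ω) (_ : IsProbabilityMeasure (ℙ : Measure Ω))
        (Xs : Fin N → Ω → EuclideanSpace ℝ (Fin (d + 1))),
        (∀ i, Measurable (Xs i)) →
        iIndepFun Xs ℙ →
        (∀ i, Measure.map (Xs i) ℙ =
          (μH[d] (sphere (0 : EuclideanSpace ℝ (Fin (d + 1))) 1))⁻¹ •
            (μH[(d : ℝ)]).restrict (sphere (0 : EuclideanSpace ℝ (Fin (d + 1))) 1)) →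
        ENNReal.ofReal (1 - δ) ≤
          ℙ {ωp : Ω |
            (⨆ x : sphere (0 : EuclideanSpace ℝ (Fin (d + 1))) 1,
                ⨅ i : Fin N, dist (x : EuclideanSpace ℝ (Fin (d + 1))) (Xs i ωp)) ≤
              (Real.log (N / δ) / (C₃ * N)) ^ ((1 : ℝ) / d)} := by
  classical
  have hsd : (0:ℝ) < Real.sqrt d := Real.sqrt_pos.mpr (by exact_mod_cast hd)
  have hsd1 : (1:ℝ) ≤ Real.sqrt d := by
    rw [show (1:ℝ) = Real.sqrt 1 by simp]
    exact Real.sqrt_le_sqrt (by exact_mod_cast hd)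
  set S : Set (EuclideanSpace ℝ (Fin (d+1))) := sphere 0 1 with hS
  set μS : ℝ≥0∞ := μH[(d:ℝ)] S with hμSdef
  set mS : ℝ := max 1 μS.toReal with hmSdef
  have hmS1 : (1:ℝ) ≤ mS := le_max_left _ _
  have hmS0 : (0:ℝ) < mS := lt_of_lt_of_le one_pos hmS1
  set cL : ℝ := (1/(2*Real.sqrt d))^d / mS with hcLdef
  have hcL0 : 0 < cL := by positivity
  have hcL1 : cL ≤ 1 := by
    rw [hcLdef, div_le_one hmS0]
    calc (1/(2*Real.sqrt d))^d ≤ 1 := by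
          apply pow_le_one₀ (by positivity)
          rw [div_le_one (by positivity)]
          linarith
      _ ≤ mS := hmS1
  set C₃ : ℝ := cL / (8^(d+1)+3) with hC₃def
  have hC₃0 : 0 < C₃ := by
    rw [hC₃def]; positivity
  refine ⟨C₃, hC₃0, ?_⟩
  intro δ hδ0 hδ1 N hNδ Ω mΩ hprob Xs hmeas hindep hmap
  haveI := hprob
  have hN0 : 0 < N := by
    by_contra h
    push_neg at h
    interval_cases N
    · simp only [Nat.cast_zero] at hNδ
      nlinarith [Real.exp_pos 1]
  have hN1 : (1:ℝ) ≤ (N:ℝ) := by exact_mod_cast hN0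
  have hNpos : (0:ℝ) < N := by linarith
  set i0 : Fin N := ⟨0, hN0⟩ with hi0
  -- basic facts about μS
  have hν : IsProbabilityMeasure (Measure.map (Xs i0) ℙ) :=
    Measure.isProbabilityMeasure_map (hmeas i0).aemeasurable
  rw [hmap i0] at hν
  have hkey : μS⁻¹ * μS = 1 := by
    have huniv := hν.measure_univ
    rw [Measure.smul_apply, smul_eq_mul, Measure.restrict_apply_univ] at huniv
    exact huniv
  have hμS0 : μS ≠ 0 := by
    intro h; rw [h] at hkey; simp at hkey
  have hμStop : μS ≠ ⊤ := by
    intro h; rw [h] at hkey; simp at hkey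
  have hXA : ∀ (i : Fin N) (A : Set (EuclideanSpace ℝ (Fin (d+1)))), MeasurableSet A →
      ℙ (Xs i ⁻¹' A) = μS⁻¹ * μH[(d:ℝ)] (A ∩ S) := by
    intro i A hA
    rw [← Measure.map_apply (hmeas i) hA, hmap i, Measure.smul_apply, smul_eq_mul,
      Measure.restrict_apply hA]
  have hSmeas : MeasurableSet S := isClosed_sphere.measurableSet
  have hνS : ∀ i : Fin N, ℙ (Xs i ⁻¹' S) = 1 := by
    intro i
    rw [hXA i S hSmeas, Set.inter_self, ← hμSdef, hkey]
  -- the threshold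
  set L : ℝ := Real.log (N/δ) with hLdef
  have hNδpos : (0:ℝ) < (N:ℝ)/δ := by positivity
  have hL1 : 1 < L := by
    rw [hLdef, ← Real.exp_lt_exp (x := 1), Real.exp_log hNδpos, lt_div_iff₀ hδ0]
    nlinarith [hNδ]
  set t : ℝ := (L / (C₃ * N)) ^ ((1:ℝ)/d) with htdef
  have hLC : 0 < L / (C₃ * N) := by positivity
  have ht0 : 0 < t := Real.rpow_pos_of_pos hLC _
  have htd : t^d = L / (C₃ * N) := by
    rw [htdef, one_div]
    exact Real.rpow_inv_natCast_pow hLC.le hd.ne'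
  have hbddBelow : ∀ (ω : Ω), BddBelow (Set.range fun i : Fin N =>
      dist ((0:EuclideanSpace ℝ (Fin (d+1)))) (Xs i ω)) := by
    exact fun ω => ⟨0, by rintro _ ⟨i, rfl⟩; exact dist_nonneg⟩
  by_cases hcase : t < 2
  · -- main case
    obtain ⟨net, hnetS, hnet, hcard⟩ := exists_net d ht0 hcase
    set q : ℝ := cL * t^d with hqdef
    have hq0 : 0 < q := by positivity
    have hq1 : q ≤ 1 := by
      have h1 : cL ≤ (1/(2*Real.sqrt d))^d := by
        rw [hcLdef]
        exact div_le_self (by positivity) hmS1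
      have h2 : t^d ≤ 2^d := pow_le_pow_left₀ ht0.le hcase.le d
      calc q = cL * t^d := hqdef
        _ ≤ (1/(2*Real.sqrt d))^d * 2^d := by
            apply mul_le_mul h1 h2 (by positivity) (by positivity)
        _ = ((1/(2*Real.sqrt d)) * 2)^d := (mul_pow _ _ _).symm
        _ ≤ (1/Real.sqrt d)^d := by
            apply pow_le_pow_left₀ (by positivity)
            rw [div_mul_eq_mul_div, one_mul, div_le_div_iff₀ (by positivity) (by positivity)]
            ring_nf
            nlinarith [hsd]
        _ ≤ 1 := by
            apply pow_le_one₀ (by positivity)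
            rw [div_le_one (by positivity)]
            linarith
    -- cap probability lower bound
    have hcap : ∀ (i : Fin N), ∀ y ∈ net, ENNReal.ofReal q ≤ ℙ (Xs i ⁻¹' ball y (t/2)) := by
      intro i y hy
      rw [hXA i _ measurableSet_ball]
      have h1 : μH[(d:ℝ)] (ball y (t/2) ∩ S) = μH[(d:ℝ)] (ball (pole d) (t/2) ∩ S) :=
        cap_center d (hnetS hy) _
      have h2 := cap_pole d hd (show 0 < t/2 by linarith) (show t/2 ≤ 2 by linarith)
      have h3 : ((t/2) / Real.sqrt d)^d = q * mS := by
        have e1 : ((t/2) / Real.sqrt d) = (1/(2*Real.sqrt d)) * t := by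
          field_simp
        rw [e1, mul_pow, hqdef, hcLdef]
        field_simp
      have h4 : ENNReal.ofReal (q * mS) ≤ μH[(d:ℝ)] (ball y (t/2) ∩ S) := by
        rw [h1, ← h3]
        exact h2
      have h5 : μS ≤ ENNReal.ofReal mS := by
        rw [← ENNReal.ofReal_toReal hμStop]
        exact ENNReal.ofReal_le_ofReal (le_max_right _ _)
      calc ENNReal.ofReal q = (ENNReal.ofReal mS)⁻¹ * ENNReal.ofReal (q * mS) := by
            rw [← ENNReal.div_eq_inv_mul, ← ENNReal.ofReal_div_of_pos hmS0,
              mul_div_cancel_right₀ _ (ne_of_gt hmS0)]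
        _ ≤ μS⁻¹ * ENNReal.ofReal (q * mS) := by
            apply mul_le_mul_left
            exact ENNReal.inv_le_inv' h5
        _ ≤ μS⁻¹ * μH[(d:ℝ)] (ball y (t/2) ∩ S) := by
            exact mul_le_mul_right h4 _
    -- bad event bound
    have hbadbound : ∀ y ∈ net,
        ℙ (⋂ i, Xs i ⁻¹' (ball y (t/2))ᶜ) ≤ ENNReal.ofReal ((1-q)^N) := by
      intro y hy
      rw [hindep.meas_iInter (fun i => ⟨(ball y (t/2))ᶜ, measurableSet_ball.compl, rfl⟩)]
      have hfac : ∀ i : Fin N, ℙ (Xs i ⁻¹' (ball y (t/2))ᶜ) ≤ ENNReal.ofReal (1-q) := by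
        intro i
        rw [Set.preimage_compl,
          measure_compl ((hmeas i) measurableSet_ball) (measure_ne_top _ _), measure_univ]
        have : ENNReal.ofReal (1-q) = 1 - ENNReal.ofReal q := by
          rw [ENNReal.ofReal_sub 1 hq0.le, ENNReal.ofReal_one]
        rw [this]
        exact tsub_le_tsub_left (hcap i y hy) 1
      calc ∏ i, ℙ (Xs i ⁻¹' (ball y (t/2))ᶜ)
          ≤ ∏ _i : Fin N, ENNReal.ofReal (1-q) := Finset.prod_le_prod' (fun i _ => hfac i)
        _ = ENNReal.ofReal (1-q) ^ N := by
            rw [Finset.prod_const, Finset.card_univ, Fintype.card_fin]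
        _ = ENNReal.ofReal ((1-q)^N) := (ENNReal.ofReal_pow (by linarith) N).symm
    set Bad : Set Ω := ⋃ y ∈ net, ⋂ i, Xs i ⁻¹' (ball y (t/2))ᶜ with hBaddef
    have hBadMeas : MeasurableSet Bad :=
      net.measurableSet_biUnion (fun y _ =>
        MeasurableSet.iInter (fun i => (hmeas i) measurableSet_ball.compl))
    have hBadLe : ℙ Bad ≤ ENNReal.ofReal δ := by
      have hend := endgame d hd δ N hδ0 hδ1 hN1 hNδ cL hcL0 hcL1 t net.card ht0
        (Nat.cast_nonneg _) hcard hq1 (by rw [htd, hC₃def])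
      calc ℙ Bad ≤ ∑ y ∈ net, ℙ (⋂ i, Xs i ⁻¹' (ball y (t/2))ᶜ) :=
            measure_biUnion_finset_le net _
        _ ≤ ∑ _y ∈ net, ENNReal.ofReal ((1-q)^N) := Finset.sum_le_sum hbadbound
        _ = (net.card : ℝ≥0∞) * ENNReal.ofReal ((1-q)^N) := by
            rw [Finset.sum_const, nsmul_eq_mul]
        _ = ENNReal.ofReal ((net.card : ℝ) * (1-q)^N) := by
            rw [ENNReal.ofReal_mul (Nat.cast_nonneg _), ENNReal.ofReal_natCast]
        _ ≤ ENNReal.ofReal δ := ENNReal.ofReal_le_ofReal hend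
    have hgoodsub : Badᶜ ⊆ {ωp : Ω |
        (⨆ x : S, ⨅ i : Fin N, dist (x : EuclideanSpace ℝ (Fin (d+1))) (Xs i ωp)) ≤ t} := by
      intro ω hω
      simp only [hBaddef, Set.compl_iUnion, Set.mem_iInter, Set.mem_compl_iff] at hω
      show (⨆ x : S, ⨅ i : Fin N, dist (x : EuclideanSpace ℝ (Fin (d+1))) (Xs i ω)) ≤ t
      apply Real.iSup_le _ ht0.le
      intro x
      obtain ⟨y, hy, hxy⟩ := hnet x x.2
      have hnotall := hω y hy
      push_neg at hnotall
      obtain ⟨i, hi⟩ := hnotall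
      simp only [Set.mem_preimage, Set.mem_compl_iff, not_not] at hi
      have hdist : dist (x : EuclideanSpace ℝ (Fin (d+1))) (Xs i ω) ≤ t := by
        have h2 : dist (Xs i ω) y < t/2 := mem_ball.mp hi
        calc dist (x : EuclideanSpace ℝ (Fin (d+1))) (Xs i ω)
            ≤ dist (x : EuclideanSpace ℝ (Fin (d+1))) y + dist y (Xs i ω) := dist_triangle _ _ _
          _ ≤ t := by rw [dist_comm y]; linarith
      refine le_trans (ciInf_le ⟨0, ?_⟩ i) hdist
      rintro _ ⟨j, rfl⟩
      exact dist_nonneg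
    have hfinal : ENNReal.ofReal (1-δ) ≤ ℙ (Badᶜ) := by
      calc ENNReal.ofReal (1-δ) = 1 - ENNReal.ofReal δ := by
            rw [ENNReal.ofReal_sub 1 hδ0.le, ENNReal.ofReal_one]
        _ ≤ 1 - ℙ Bad := tsub_le_tsub_left hBadLe 1
        _ = ℙ (Badᶜ) := (prob_compl_eq_one_sub hBadMeas).symm
    calc ENNReal.ofReal (1-δ) ≤ ℙ (Badᶜ) := hfinal
      _ ≤ _ := measure_mono hgoodsub
  · -- easy case : the bound exceeds the diameter
    push_neg at hcase
    have hsub : (⋂ i, Xs i ⁻¹' S) ⊆ {ωp : Ω |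
        (⨆ x : S, ⨅ i : Fin N, dist (x : EuclideanSpace ℝ (Fin (d+1))) (Xs i ωp)) ≤ t} := by
      intro ω hω
      show (⨆ x : S, ⨅ i : Fin N, dist (x : EuclideanSpace ℝ (Fin (d+1))) (Xs i ω)) ≤ t
      apply Real.iSup_le _ ht0.le
      intro x
      have hx0 : Xs i0 ω ∈ S := Set.mem_iInter.mp hω i0
      have hdist : dist (x : EuclideanSpace ℝ (Fin (d+1))) (Xs i0 ω) ≤ t := by
        have h1 : ‖(x : EuclideanSpace ℝ (Fin (d+1)))‖ = 1 := by
          have := x.2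
          simpa [hS, mem_sphere_iff_norm] using this
        have h2 : ‖Xs i0 ω‖ = 1 := by
          simpa [hS, mem_sphere_iff_norm] using hx0
        calc dist (x : EuclideanSpace ℝ (Fin (d+1))) (Xs i0 ω)
            = ‖(x : EuclideanSpace ℝ (Fin (d+1))) - Xs i0 ω‖ := dist_eq_norm _ _
          _ ≤ ‖(x : EuclideanSpace ℝ (Fin (d+1)))‖ + ‖Xs i0 ω‖ := norm_sub_le _ _
          _ = 2 := by rw [h1, h2]; norm_num
          _ ≤ t := hcase
      refine le_trans (ciInf_le ⟨0, ?_⟩ i0) hdist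
      rintro _ ⟨j, rfl⟩
      exact dist_nonneg
    have hone : ℙ (⋂ i, Xs i ⁻¹' S) = 1 := by
      rw [← prob_compl_eq_zero_iff (MeasurableSet.iInter (fun i => (hmeas i) hSmeas))]
      refine le_antisymm ?_ (by positivity)
      rw [Set.compl_iInter]
      calc ℙ (⋃ i, (Xs i ⁻¹' S)ᶜ) ≤ ∑' i : Fin N, ℙ ((Xs i ⁻¹' S)ᶜ) := measure_iUnion_le _
        _ = 0 := by
          have hz : ∀ i : Fin N, ℙ ((Xs i ⁻¹' S)ᶜ) = 0 := by
            intro i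
            rw [measure_compl ((hmeas i) hSmeas) (measure_ne_top _ _), measure_univ, hνS i]
            simp
          simp [hz]
    calc ENNReal.ofReal (1-δ) ≤ 1 := ENNReal.ofReal_le_one.mpr (by linarith)
      _ = ℙ (⋂ i, Xs i ⁻¹' S) := hone.symm
      _ ≤ _ := measure_mono hsub
end
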